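/- arXiv:math/0410118 — 4 statements merged into one kernel-verified Lean document; each statement's English description precedes it below -/
import Mathlib

section
/- Suppose F is supported in [−p,p], α ∈ (0,2), and β^α θ₊(β) → θ₊ > 0 as β → 0. Then ρ₊(β) := ∫_{(β,∞)} x^α F(dx) satisfies ρ₊(β)/log(1/β) → α θ₊ as β → 0. -/
open MeasureTheory Filter Set Topology

section Aux
variable {F : Measure ℝ}

private lemma rpow_le_max_aux {a b t r : ℝ} (ha : 0 < a) (hat : a ≤ t) (htb : t ≤ b) :
    t ^ r ≤ max (a ^ r) (b ^ r) := by
  rcases le_or_gt 0 r with hr | hr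
  · exact le_max_of_le_right (Real.rpow_le_rpow (ha.trans_le hat).le htb hr)
  · exact le_max_of_le_left (Real.rpow_le_rpow_of_nonpos ha hat hr.le)

private lemma integrableOn_g_aux (F : Measure ℝ) (α : ℝ)
    (hfin : ∀ t : ℝ, 0 < t → F (Ioi t) ≠ ⊤) {a b : ℝ} (ha : 0 < a) :
    IntegrableOn (fun t => (F (Ioi t)).toReal * (α * t ^ (α - 1))) (Ioc a b) volume := by
  have hmeas : Measurable fun t : ℝ => (F (Ioi t)).toReal * (α * t ^ (α - 1)) :=
    ((Antitone.measurable fun s t hst =>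
      measure_mono (Ioi_subset_Ioi hst)).ennreal_toReal).mul
      (measurable_const.mul (measurable_id.pow_const _))
  rcases le_or_gt b a with hba | hab
  · rw [Ioc_eq_empty (by exact fun h => absurd h (not_lt.mpr hba))]
    exact integrableOn_empty
  refine Integrable.mono' (g := fun _ =>
      (F (Ioi a)).toReal * (|α| * max (a ^ (α-1)) (b ^ (α-1))))
    (integrableOn_const measure_Ioc_lt_top.ne)
    hmeas.aestronglyMeasurable ?_
  refine ae_restrict_of_forall_mem measurableSet_Ioc fun t ht => ?_
  have ht0 : 0 < t := ha.trans ht.1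
  rw [Real.norm_eq_abs, abs_mul, abs_mul]
  refine mul_le_mul ?_ ?_ (mul_nonneg (abs_nonneg _) (abs_nonneg _)) ENNReal.toReal_nonneg
  · rw [abs_of_nonneg ENNReal.toReal_nonneg]
    exact ENNReal.toReal_mono (hfin a ha) (measure_mono (Ioi_subset_Ioi ht.1.le))
  · refine mul_le_mul_of_nonneg_left ?_ (abs_nonneg α)
    rw [abs_of_nonneg (Real.rpow_nonneg ht0.le _)]
    exact rpow_le_max_aux ha ht.1.le ht.2

private lemma fin_aux (F : Measure ℝ)
    (hlevy : ∫⁻ x, ENNReal.ofReal (min (x ^ 2) 1) ∂F < ⊤) :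
    ∀ t : ℝ, 0 < t → F (Ioi t) ≠ ⊤ := by
  intro t ht
  intro h
  have hc : (0:ℝ) < min (t^2) 1 := lt_min (pow_pos ht 2) one_pos
  have hle : ∫⁻ x in Ioi t, ENNReal.ofReal (min (t^2) 1) ∂F
      ≤ ∫⁻ x, ENNReal.ofReal (min (x^2) 1) ∂F := by
    refine le_trans (setLIntegral_mono (by fun_prop) ?_) (setLIntegral_le_lintegral _ _)
    intro x hx
    have hx' : t < x := hx
    exact ENNReal.ofReal_le_ofReal
      (min_le_min (pow_le_pow_left₀ ht.le hx'.le 2) le_rfl)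
  rw [setLIntegral_const, h, ENNReal.mul_top (ENNReal.ofReal_pos.mpr hc).ne'] at hle
  exact absurd (top_le_iff.mp hle) (by simpa using hlevy.ne)

private lemma key_id_aux (F : Measure ℝ) (p α : ℝ)
    (hsupp : F {x : ℝ | p < |x|} = 0)
    (hfin : ∀ t : ℝ, 0 < t → F (Ioi t) ≠ ⊤)
    (hα0 : 0 < α) {β : ℝ} (hβ : 0 < β) (hβp : β < p) :
    ∫ x in Ioi β, x ^ α ∂F
      = β ^ α * (F (Ioi β)).toReal
        + ∫ t in Ioc β p, (F (Ioi t)).toReal * (α * t ^ (α - 1)) := by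
  have hF0 : ∀ t : ℝ, p ≤ t → F (Ioi t) = 0 := by
    intro t ht
    refine measure_mono_null (fun x hx => ?_) hsupp
    have : p < x := lt_of_le_of_lt ht hx
    exact lt_of_lt_of_le this (le_abs_self x)
  set μ := F.restrict (Ioi β) with hμ
  have f_nn : 0 ≤ᵐ[μ] (id : ℝ → ℝ) := by
    rw [hμ]
    exact ae_restrict_of_forall_mem measurableSet_Ioi fun x hx => (hβ.trans hx).le
  have g_intble : ∀ t > (0:ℝ), IntervalIntegrable (fun s : ℝ => α * s ^ (α - 1)) volume 0 t :=
    fun t _ => (intervalIntegral.intervalIntegrable_rpow' (by linarith)).const_mul α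
  have g_nn : ∀ᵐ t ∂(volume.restrict (Ioi (0:ℝ))), 0 ≤ α * t ^ (α-1) := by
    exact ae_restrict_of_forall_mem measurableSet_Ioi fun t ht =>
      mul_nonneg hα0.le (Real.rpow_nonneg (le_of_lt ht) _)
  have layer := lintegral_comp_eq_lintegral_meas_lt_mul μ f_nn aemeasurable_id g_intble g_nn
  have hLHS : ∫⁻ ω, ENNReal.ofReal (∫ t in (0:ℝ)..(id ω), α * t ^ (α - 1)) ∂μ
      = ∫⁻ x in Ioi β, ENNReal.ofReal (x ^ α) ∂F := by
    rw [hμ]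
    refine lintegral_congr_ae (ae_restrict_of_forall_mem measurableSet_Ioi fun ω hω => ?_)
    have hω0 : (0:ℝ) < ω := hβ.trans hω
    show ENNReal.ofReal (∫ t in (0:ℝ)..(id ω), α * t ^ (α - 1)) = ENNReal.ofReal (ω ^ α)
    simp only [id_eq]
    congr 1
    rw [intervalIntegral.integral_const_mul,
      integral_rpow (Or.inl (by linarith : (-1:ℝ) < α - 1))]
    rw [sub_add_cancel, Real.zero_rpow hα0.ne', sub_zero]
    field_simp
  have hμIoi : ∀ t : ℝ, μ {a : ℝ | t < id a} = F (Ioi (max t β)) := by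
    intro t
    have : {a : ℝ | t < id a} = Ioi t := rfl
    rw [this, hμ, Measure.restrict_apply measurableSet_Ioi, Ioi_inter_Ioi]
  have hRHS : ∫⁻ t in Ioi (0:ℝ), μ {a : ℝ | t < id a} * ENNReal.ofReal (α * t ^ (α-1))
      = F (Ioi β) * ENNReal.ofReal (β ^ α)
        + ENNReal.ofReal (∫ t in Ioc β p, (F (Ioi t)).toReal * (α * t ^ (α - 1))) := by
    have hsplit : (Ioi (0:ℝ)) = Ioc 0 β ∪ Ioi β := (Ioc_union_Ioi_eq_Ioi hβ.le).symm
    rw [hsplit, lintegral_union measurableSet_Ioi (Ioc_disjoint_Ioi le_rfl)]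
    congr 1
    · have h1 : ∫⁻ t in Ioc (0:ℝ) β, μ {a : ℝ | t < id a} * ENNReal.ofReal (α * t ^ (α-1))
          = ∫⁻ t in Ioc (0:ℝ) β, F (Ioi β) * ENNReal.ofReal (α * t ^ (α-1)) := by
        refine setLIntegral_congr_fun measurableSet_Ioc (fun t ht => ?_)
        rw [hμIoi t, max_eq_right ht.2]
      rw [h1, lintegral_const_mul' _ _ (hfin β hβ)]
      congr 1
      rw [← ofReal_integral_eq_lintegral_ofReal ((g_intble β hβ).1)
        (ae_restrict_of_forall_mem measurableSet_Ioc fun t ht =>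
          mul_nonneg hα0.le (Real.rpow_nonneg ht.1.le _))]
      congr 1
      rw [← intervalIntegral.integral_of_le hβ.le]
      rw [intervalIntegral.integral_const_mul,
        integral_rpow (Or.inl (by linarith : (-1:ℝ) < α - 1))]
      rw [sub_add_cancel, Real.zero_rpow hα0.ne', sub_zero]
      field_simp
    · have h2 : ∫⁻ t in Ioi β, μ {a : ℝ | t < id a} * ENNReal.ofReal (α * t ^ (α-1))
          = ∫⁻ t in Ioi β, F (Ioi t) * ENNReal.ofReal (α * t ^ (α-1)) := by
        refine setLIntegral_congr_fun measurableSet_Ioi (fun t ht => ?_)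
        rw [hμIoi t, max_eq_left (le_of_lt ht)]
      rw [h2]
      have hsplit2 : (Ioi β) = Ioc β p ∪ Ioi p := (Ioc_union_Ioi_eq_Ioi hβp.le).symm
      rw [hsplit2, lintegral_union measurableSet_Ioi (Ioc_disjoint_Ioi le_rfl)]
      have h3 : ∫⁻ t in Ioi p, F (Ioi t) * ENNReal.ofReal (α * t ^ (α-1)) = 0 := by
        rw [← lintegral_zero (μ := volume.restrict (Ioi p))]
        refine setLIntegral_congr_fun measurableSet_Ioi (fun t ht => ?_)
        rw [hF0 t (le_of_lt ht), zero_mul]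
      rw [h3, add_zero]
      have h4 : ∫⁻ t in Ioc β p, F (Ioi t) * ENNReal.ofReal (α * t ^ (α-1))
          = ∫⁻ t in Ioc β p, ENNReal.ofReal ((F (Ioi t)).toReal * (α * t ^ (α - 1))) := by
        refine setLIntegral_congr_fun measurableSet_Ioc (fun t ht => ?_)
        rw [ENNReal.ofReal_mul ENNReal.toReal_nonneg,
          ENNReal.ofReal_toReal (hfin t (hβ.trans ht.1))]
      rw [h4, ← ofReal_integral_eq_lintegral_ofReal
        (integrableOn_g_aux F α hfin hβ)
        (ae_restrict_of_forall_mem measurableSet_Ioc fun t ht =>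
          mul_nonneg ENNReal.toReal_nonneg
            (mul_nonneg hα0.le (Real.rpow_nonneg (hβ.trans ht.1).le _)))]
  have hkey : ∫⁻ x in Ioi β, ENNReal.ofReal (x ^ α) ∂F
      = F (Ioi β) * ENNReal.ofReal (β ^ α)
        + ENNReal.ofReal (∫ t in Ioc β p, (F (Ioi t)).toReal * (α * t ^ (α - 1))) := by
    rw [← hLHS, layer, hRHS]
  have f_nn' : 0 ≤ᵐ[μ] fun x : ℝ => x ^ α := by
    rw [hμ]
    exact ae_restrict_of_forall_mem measurableSet_Ioi fun x hx =>
      Real.rpow_nonneg (hβ.trans hx).le _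
  rw [integral_eq_lintegral_of_nonneg_ae f_nn'
    ((measurable_id.pow_const _).aestronglyMeasurable)]
  rw [hkey, ENNReal.toReal_add, ENNReal.toReal_mul, ENNReal.toReal_ofReal
    (Real.rpow_nonneg hβ.le _), ENNReal.toReal_ofReal]
  · ring
  · exact setIntegral_nonneg measurableSet_Ioc fun t ht =>
      mul_nonneg ENNReal.toReal_nonneg
        (mul_nonneg hα0.le (Real.rpow_nonneg (hβ.trans ht.1).le _))
  · exact ENNReal.mul_ne_top (hfin β hβ) ENNReal.ofReal_ne_top
  · exact ENNReal.ofReal_ne_top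

end Aux

set_option maxHeartbeats 1000000 in
/-- Under (H2-α) on the positive side with `θ₊ > 0`,
`ρ₊(β) = ∫_{(β,∞)} x^α F(dx)` satisfies `ρ₊(β)/log(1/β) → α θ₊` as `β → 0`. -/
theorem stmt5 (F : Measure ℝ) (p α θp : ℝ) (hp : 1 ≤ p)
    (hsupp : F {x : ℝ | p < |x|} = 0)
    (hlevy : ∫⁻ x, ENNReal.ofReal (min (x ^ 2) 1) ∂F < ⊤)
    (hα0 : 0 < α) (hα2 : α < 2) (hθp : 0 < θp)
    (hlim : Tendsto (fun β : ℝ => β ^ α * (F (Ioi β)).toReal) (𝓝[>] 0) (𝓝 θp)) :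
    Tendsto (fun β : ℝ => (∫ x in Ioi β, x ^ α ∂F) / Real.log (1 / β))
      (𝓝[>] 0) (𝓝 (α * θp)) := by
  have hfin := fin_aux F hlevy
  have hp0 : (0:ℝ) < p := lt_of_lt_of_le one_pos hp
  have hD : Tendsto (fun β : ℝ => Real.log (1/β)) (𝓝[>] (0:ℝ)) atTop := by
    have h := Real.tendsto_log_atTop.comp (tendsto_inv_nhdsGT_zero (𝕜 := ℝ))
    refine h.congr fun x => ?_
    simp [Function.comp, one_div]
  have hA : Tendsto (fun β : ℝ => (β ^ α * (F (Ioi β)).toReal) / Real.log (1/β))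
      (𝓝[>] (0:ℝ)) (𝓝 0) := by simpa using hlim.div_atTop hD
  have hB : Tendsto (fun β : ℝ =>
      (∫ t in Ioc β p, (F (Ioi t)).toReal * (α * t ^ (α - 1))) / Real.log (1/β))
      (𝓝[>] (0:ℝ)) (𝓝 (α * θp)) := by
    rw [Metric.tendsto_nhds]
    intro ε hε
    set ε₁ := min (θp/2) (ε/(2*α)) with hε₁def
    have hε₁pos : 0 < ε₁ := lt_min (by positivity) (by positivity)
    obtain ⟨δ₀, hδ₀pos, hδ₀⟩ := Metric.tendsto_nhdsWithin_nhds.mp hlim ε₁ hε₁pos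
    set δ := min δ₀ 1 / 2 with hδdef
    have hmin_pos : 0 < min δ₀ 1 := lt_min hδ₀pos one_pos
    have hδpos : 0 < δ := by positivity
    have hδlt : δ < δ₀ := by
      have h1 := min_le_left δ₀ 1
      simp only [hδdef]; linarith
    have hδ1 : δ ≤ 1/2 := by
      have h1 := min_le_right δ₀ 1
      simp only [hδdef]; linarith
    have hδp : δ < p := by linarith
    have hδ1' : δ < 1 := by linarith
    have hclose : ∀ t : ℝ, 0 < t → t ≤ δ → |t ^ α * (F (Ioi t)).toReal - θp| < ε₁ := by
      intro t ht htδ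
      have h := hδ₀ (mem_Ioi.mpr ht) (by
        rw [dist_zero_right, Real.norm_eq_abs, abs_of_pos ht]; linarith)
      rwa [Real.dist_eq] at h
    set M : ℝ := (F (Ioi δ)).toReal * (α * max (δ ^ (α-1)) (p ^ (α-1))) with hMdef
    have hM0 : 0 ≤ M := by
      refine mul_nonneg ENNReal.toReal_nonneg (mul_nonneg hα0.le ?_)
      exact le_max_of_le_left (Real.rpow_nonneg hδpos.le _)
    set C : ℝ := M * (p - δ) with hCdef
    have hC0 : 0 ≤ C := mul_nonneg hM0 (by linarith)
    have hlogδ : Real.log δ ≤ 0 := Real.log_nonpos hδpos.le hδ1'.le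
    set K : ℝ := C + α * θp * (-Real.log δ) with hKdef
    have hK0 : 0 ≤ K := by
      have : 0 ≤ α * θp * (-Real.log δ) :=
        mul_nonneg (mul_nonneg hα0.le hθp.le) (by linarith)
      linarith
    have h1 : ∀ᶠ β : ℝ in 𝓝[>] 0, β < δ := by
      filter_upwards [mem_nhdsWithin_of_mem_nhds (Iio_mem_nhds hδpos)] with x hx using hx
    have h3 : ∀ᶠ β : ℝ in 𝓝[>] 0, max (2*K/ε) 0 < Real.log (1/β) :=
      hD.eventually (eventually_gt_atTop _)
    filter_upwards [h1, self_mem_nhdsWithin, h3] with β hβδ hβ0' hβD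
    have hβ0 : (0:ℝ) < β := hβ0'
    have hD0 : 0 < Real.log (1/β) := lt_of_le_of_lt (le_max_right _ _) hβD
    have hDK : 2*K/ε < Real.log (1/β) := lt_of_le_of_lt (le_max_left _ _) hβD
    set D := Real.log (1/β) with hDdef
    have hDeq : D = -Real.log β := by rw [hDdef, one_div, Real.log_inv]
    set g : ℝ → ℝ := fun t => (F (Ioi t)).toReal * (α * t ^ (α - 1)) with hgdef
    have hgint1 : IntegrableOn g (Ioc β δ) volume := integrableOn_g_aux F α hfin hβ0
    have hgint2 : IntegrableOn g (Ioc δ p) volume := integrableOn_g_aux F α hfin hδpos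
    have hIsplit : ∫ t in Ioc β p, g t = (∫ t in Ioc β δ, g t) + ∫ t in Ioc δ p, g t := by
      rw [← Ioc_union_Ioc_eq_Ioc hβδ.le hδp.le,
        setIntegral_union (Ioc_disjoint_Ioc_of_le le_rfl) measurableSet_Ioc hgint1 hgint2]
    have hinv_eval : ∀ c : ℝ, ∫ t in Ioc β δ, c * t⁻¹ = c * (Real.log δ - Real.log β) := by
      intro c
      rw [integral_const_mul, ← intervalIntegral.integral_of_le hβδ.le,
        integral_inv (by rw [uIcc_of_le hβδ.le]; exact fun h => absurd h.1 (not_le.mpr hβ0)),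
        Real.log_div hδpos.ne' hβ0.ne']
    have hinv_int : ∀ c : ℝ, IntegrableOn (fun t : ℝ => c * t⁻¹) (Ioc β δ) volume := by
      intro c
      refine (ContinuousOn.integrableOn_compact isCompact_Icc ?_).mono_set Ioc_subset_Icc_self
      exact continuousOn_const.mul
        (continuousOn_id.inv₀ fun t ht => ne_of_gt (lt_of_lt_of_le hβ0 ht.1))
    have hgrepr : ∀ t : ℝ, t ∈ Ioc β δ → g t = (α * (t ^ α * (F (Ioi t)).toReal)) * t⁻¹ := by
      intro t ht
      have ht0 : 0 < t := hβ0.trans ht.1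
      rw [hgdef]
      simp only
      rw [Real.rpow_sub_one ht0.ne']
      field_simp
    have hup1 : ∫ t in Ioc β δ, g t ≤ (α * (θp + ε₁)) * (Real.log δ - Real.log β) := by
      rw [← hinv_eval]
      refine setIntegral_mono_on hgint1 (hinv_int _) measurableSet_Ioc fun t ht => ?_
      rw [hgrepr t ht]
      have ht0 : 0 < t := hβ0.trans ht.1
      have hcl := hclose t ht0 ht.2
      have : t ^ α * (F (Ioi t)).toReal ≤ θp + ε₁ := by
        have := abs_lt.mp hcl; linarith [this.2]
      refine mul_le_mul_of_nonneg_right ?_ (inv_nonneg.mpr ht0.le)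
      exact mul_le_mul_of_nonneg_left this hα0.le
    have hlo1 : (α * (θp - ε₁)) * (Real.log δ - Real.log β) ≤ ∫ t in Ioc β δ, g t := by
      rw [← hinv_eval]
      refine setIntegral_mono_on (hinv_int _) hgint1 measurableSet_Ioc fun t ht => ?_
      rw [hgrepr t ht]
      have ht0 : 0 < t := hβ0.trans ht.1
      have hcl := hclose t ht0 ht.2
      have : θp - ε₁ ≤ t ^ α * (F (Ioi t)).toReal := by
        have := abs_lt.mp hcl; linarith [this.1]
      refine mul_le_mul_of_nonneg_right ?_ (inv_nonneg.mpr ht0.le)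
      exact mul_le_mul_of_nonneg_left this hα0.le
    have hup2 : ∫ t in Ioc δ p, g t ≤ C := by
      have hle : ∫ t in Ioc δ p, g t ≤ ∫ _ in Ioc δ p, M := by
        refine setIntegral_mono_on hgint2
          (integrableOn_const measure_Ioc_lt_top.ne) measurableSet_Ioc
          fun t ht => ?_
        rw [hgdef, hMdef]
        simp only
        refine mul_le_mul ?_ ?_ ?_ ENNReal.toReal_nonneg
        · exact ENNReal.toReal_mono (hfin δ hδpos) (measure_mono (Ioi_subset_Ioi ht.1.le))
        · exact mul_le_mul_of_nonneg_left (rpow_le_max_aux hδpos ht.1.le ht.2) hα0.le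
        · exact mul_nonneg hα0.le (Real.rpow_nonneg (hδpos.trans ht.1).le _)
      have hconst : ∫ _ in Ioc δ p, M = (p - δ) * M := by
        rw [setIntegral_const, measureReal_def, Real.volume_Ioc, ENNReal.toReal_ofReal (by linarith),
          smul_eq_mul]
      rw [hconst] at hle
      rw [hCdef]; linarith
    have hlo2 : 0 ≤ ∫ t in Ioc δ p, g t := by
      refine setIntegral_nonneg measurableSet_Ioc fun t ht => ?_
      exact mul_nonneg ENNReal.toReal_nonneg
        (mul_nonneg hα0.le (Real.rpow_nonneg (hδpos.trans ht.1).le _))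
    -- combine into two-sided bound on I := ∫ t in Ioc β p, g t
    set I := ∫ t in Ioc β p, g t with hIdef
    have hIup : I ≤ α * (θp + ε₁) * (Real.log δ + D) + C := by
      rw [hIsplit, hDeq]; linarith
    have hIlo : α * (θp - ε₁) * (Real.log δ + D) ≤ I := by
      rw [hIsplit, hDeq]; linarith
    have habs : |I - α * θp * D| ≤ α * ε₁ * D + K := by
      have hb1 : α * (θp + ε₁) * Real.log δ ≤ 0 :=
        mul_nonpos_of_nonneg_of_nonpos (by positivity) hlogδ
      have hb2 : α * θp * Real.log δ ≥ -K := by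
        rw [hKdef]; nlinarith
      have hb3 : α * (θp - ε₁) * Real.log δ ≥ α * θp * Real.log δ := by nlinarith
      have hCK : C ≤ K := by
        rw [hKdef]; nlinarith [mul_nonneg (mul_nonneg hα0.le hθp.le) (neg_nonneg.mpr hlogδ)]
      rw [abs_le]
      constructor <;> nlinarith
    -- conclude
    rw [Real.dist_eq]
    have heq : I / D - α * θp = (I - α * θp * D) / D := by field_simp
    rw [heq, abs_div, abs_of_pos hD0]
    have hstep : |I - α * θp * D| / D ≤ α * ε₁ + K / D := by
      rw [div_le_iff₀ hD0]
      calc |I - α * θp * D| ≤ α * ε₁ * D + K := habs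
        _ = (α * ε₁ + K / D) * D := by field_simp
    refine lt_of_le_of_lt hstep ?_
    have hs1 : α * ε₁ ≤ ε / 2 := by
      have : ε₁ ≤ ε / (2*α) := min_le_right _ _
      rw [le_div_iff₀ (by positivity)] at this
      nlinarith
    have hs2 : K / D < ε / 2 := by
      rw [div_lt_iff₀ hD0]
      rw [div_lt_iff₀ hε] at hDK
      nlinarith
    linarith
  -- assemble
  have heqv : ∀ᶠ β : ℝ in 𝓝[>] 0,
      (β ^ α * (F (Ioi β)).toReal) / Real.log (1/β)
        + (∫ t in Ioc β p, (F (Ioi t)).toReal * (α * t ^ (α - 1))) / Real.log (1/β)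
      = (∫ x in Ioi β, x ^ α ∂F) / Real.log (1 / β) := by
    have h1 : ∀ᶠ β : ℝ in 𝓝[>] 0, β < p := by
      filter_upwards [mem_nhdsWithin_of_mem_nhds (Iio_mem_nhds hp0)] with x hx using hx
    filter_upwards [h1, self_mem_nhdsWithin] with β hβp hβ0
    rw [key_id_aux F p α hsupp hfin hα0 hβ0 hβp, add_div]
  have := (hA.add hB).congr' heqv
  simpa using this
end

section
/- Suppose F is supported in [−p,p], α ∈ (1,2), and β^α θ₊(β) → θ₊ > 0 as β → 0. Then d₊(β) := ∫_{(β,∞)} x F(dx) satisfies β^{α−1} d₊(β) → α θ₊ / (α−1) as β → 0. -/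
open MeasureTheory Filter Set Topology

set_option maxHeartbeats 1000000 in
/-- Under (H2-α) on the positive side with `α ∈ (1,2)` and `θ₊ > 0`,
`d₊(β) = ∫_{(β,∞)} x F(dx)` satisfies `β^{α-1} d₊(β) → α θ₊/(α-1)` as `β → 0`. -/
theorem stmt6 (F : Measure ℝ) (p α θp : ℝ) (hp : 1 ≤ p)
    (hsupp : F {x : ℝ | p < |x|} = 0)
    (hlevy : ∫⁻ x, ENNReal.ofReal (min (x ^ 2) 1) ∂F < ⊤)
    (hα1 : 1 < α) (hα2 : α < 2) (hθp : 0 < θp)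
    (hlim : Tendsto (fun β : ℝ => β ^ α * (F (Ioi β)).toReal) (𝓝[>] 0) (𝓝 θp)) :
    Tendsto (fun β : ℝ => β ^ (α - 1) * ∫ x in Ioi β, x ∂F)
      (𝓝[>] 0) (𝓝 (α * θp / (α - 1))) := by
  have hα1' : (0:ℝ) < α - 1 := by linarith
  have hαne : α - 1 ≠ 0 := ne_of_gt hα1'
  set θr : ℝ → ℝ := fun t => (F (Ioi t)).toReal with hθr
  -- finiteness of tails
  have hfin : ∀ β : ℝ, 0 < β → F (Ioi β) < ⊤ := by
    intro β hβ
    have hmin : (0:ℝ) < min (β ^ 2) 1 := lt_min (by positivity) one_pos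
    have h1 : ENNReal.ofReal (min (β ^ 2) 1) * F (Ioi β)
        ≤ ∫⁻ x, ENNReal.ofReal (min (x ^ 2) 1) ∂F := by
      calc ENNReal.ofReal (min (β ^ 2) 1) * F (Ioi β)
          = ∫⁻ _ in Ioi β, ENNReal.ofReal (min (β ^ 2) 1) ∂F := by
            rw [setLIntegral_const, mul_comm]
        _ ≤ ∫⁻ x in Ioi β, ENNReal.ofReal (min (x ^ 2) 1) ∂F := by
            refine setLIntegral_mono (by fun_prop) fun x hx => ?_
            refine ENNReal.ofReal_le_ofReal (min_le_min ?_ le_rfl)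
            have : β ≤ x := (le_of_lt hx)
            nlinarith [hβ.le, this]
        _ ≤ ∫⁻ x, ENNReal.ofReal (min (x ^ 2) 1) ∂F := setLIntegral_le_lintegral _ _
    by_contra h
    rw [not_lt, top_le_iff] at h
    rw [h, ENNReal.mul_top (ENNReal.ofReal_pos.2 hmin).ne'] at h1
    exact lt_irrefl _ (lt_of_le_of_lt h1 hlevy)
  have hfin' : ∀ β : ℝ, 0 < β → F (Ioi β) ≠ ⊤ := fun β hβ => (hfin β hβ).ne
  -- tail vanishes beyond p
  have hzero : ∀ t : ℝ, p ≤ t → F (Ioi t) = 0 := by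
    intro t ht
    refine measure_mono_null (fun x hx => ?_) hsupp
    have hx' : t < x := hx
    have : p < x := lt_of_le_of_lt ht hx'
    simpa [abs_of_pos (lt_of_lt_of_le (by linarith : (0:ℝ) < p) this.le)] using this
  have hθzero : ∀ t : ℝ, p ≤ t → θr t = 0 := by
    intro t ht; simp [hθr, hzero t ht]
  have hθnonneg : ∀ t : ℝ, 0 ≤ θr t := fun t => ENNReal.toReal_nonneg
  have hFanti : Antitone (fun t : ℝ => F (Ioi t)) :=
    fun a b hab => measure_mono (Ioi_subset_Ioi hab)
  have hFmeas : Measurable (fun t : ℝ => F (Ioi t)) := hFanti.measurable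
  have hθmeas : Measurable θr := ENNReal.measurable_toReal.comp hFmeas
  have hθle : ∀ a t : ℝ, 0 < a → a ≤ t → θr t ≤ θr a := by
    intro a t ha hat
    exact ENNReal.toReal_mono (hfin' a ha) (measure_mono (Ioi_subset_Ioi hat))
  -- integrability of θr on Ioc a b for 0 < a
  have hθint : ∀ a b : ℝ, 0 < a → IntegrableOn θr (Ioc a b) := by
    intro a b ha
    refine Integrable.mono' (g := fun _ => θr a)
      (integrableOn_const measure_Ioc_lt_top.ne)
      (hθmeas.aestronglyMeasurable.restrict) ?_
    refine (ae_restrict_iff' measurableSet_Ioc).2 (ae_of_all _ fun t ht => ?_)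
    rw [Real.norm_eq_abs, abs_of_nonneg (hθnonneg t)]
    exact hθle a t ha ht.1.le
  -- main identity: for 0 < β < 1, ∫ x in Ioi β, x ∂F = β * θr β + ∫ t in Ioc β p, θr t
  have heq : ∀ β : ℝ, 0 < β → β < 1 →
      ∫ x in Ioi β, x ∂F = β * θr β + ∫ t in Ioc β p, θr t := by
    intro β hβ hβ1
    have hβp : β < p := lt_of_lt_of_le hβ1 hp
    -- layer cake
    have hlayer : ∫⁻ x in Ioi β, ENNReal.ofReal x ∂F = ∫⁻ t in Ioi 0, F (Ioi (max t β)) := by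
      have h := lintegral_eq_lintegral_meas_lt (F.restrict (Ioi β))
        (f := fun x => x)
        ((ae_restrict_iff' measurableSet_Ioi).2 (ae_of_all _ fun x hx => (hβ.trans hx).le))
        measurable_id.aemeasurable
      rw [h]
      refine lintegral_congr fun t => ?_
      have h2 : {a : ℝ | t < a} = Ioi t := rfl
      rw [h2, Measure.restrict_apply measurableSet_Ioi, Ioi_inter_Ioi]
    -- split the t-integral
    have hsplit : ∫⁻ t in Ioi 0, F (Ioi (max t β))
        = ENNReal.ofReal β * F (Ioi β) + ∫⁻ t in Ioi β, F (Ioi t) := by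
      rw [← Ioc_union_Ioi_eq_Ioi hβ.le,
        lintegral_union measurableSet_Ioi Ioc_disjoint_Ioi_same]
      congr 1
      · rw [setLIntegral_congr_fun measurableSet_Ioc
          (fun t (ht : t ∈ Ioc 0 β) => by
            rw [max_eq_right ht.2]), setLIntegral_const, Real.volume_Ioc, sub_zero,
          mul_comm]
      · refine setLIntegral_congr_fun measurableSet_Ioi (fun t ht => ?_)
        rw [max_eq_left (le_of_lt ht)]
    -- kill the part beyond p
    have hsplit2 : ∫⁻ t in Ioi β, F (Ioi t) = ∫⁻ t in Ioc β p, F (Ioi t) := by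
      rw [← Ioc_union_Ioi_eq_Ioi hβp.le,
        lintegral_union measurableSet_Ioi Ioc_disjoint_Ioi_same]
      have : ∫⁻ t in Ioi p, F (Ioi t) = 0 := by
        rw [setLIntegral_congr_fun measurableSet_Ioi
          (fun t (ht : t ∈ Ioi p) => hzero t (le_of_lt ht))]
        simp
      rw [this, add_zero]
    have hfinB : ∫⁻ t in Ioc β p, F (Ioi t) ≠ ⊤ := by
      have hb : ∫⁻ t in Ioc β p, F (Ioi t) ≤ F (Ioi β) * volume (Ioc β p) := by
        rw [← setLIntegral_const]
        refine setLIntegral_mono (by fun_prop) fun t ht => ?_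
        exact measure_mono (Ioi_subset_Ioi ht.1.le)
      exact (lt_of_le_of_lt hb (ENNReal.mul_lt_top (hfin β hβ) measure_Ioc_lt_top)).ne
    have h1 : ∫ x in Ioi β, x ∂F = (∫⁻ x in Ioi β, ENNReal.ofReal x ∂F).toReal := by
      rw [integral_eq_lintegral_of_nonneg_ae (f := fun x => x)
        ((ae_restrict_iff' measurableSet_Ioi).2 (ae_of_all _ fun x hx => (hβ.trans hx).le))
        measurable_id.aestronglyMeasurable.restrict]
    rw [h1, hlayer, hsplit, hsplit2, ENNReal.toReal_add
      (ENNReal.mul_ne_top ENNReal.ofReal_ne_top (hfin' β hβ)) hfinB,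
      ENNReal.toReal_mul, ENNReal.toReal_ofReal hβ.le]
    congr 1
    rw [← integral_toReal (hFmeas.aemeasurable.restrict)
      ((ae_restrict_iff' measurableSet_Ioc).2 (ae_of_all _ fun t ht =>
        lt_of_le_of_lt (measure_mono (Ioi_subset_Ioi ht.1.le)) (hfin β hβ)))]
  -- the rpow tends to zero
  have hrpow0 : Tendsto (fun β : ℝ => β ^ (α - 1)) (𝓝[>] 0) (𝓝 0) := by
    have h1 : ContinuousAt (fun x : ℝ => x ^ (α - 1)) 0 :=
      Real.continuousAt_rpow_const 0 (α - 1) (Or.inr hα1'.le)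
    have h2 := h1.tendsto
    rw [Real.zero_rpow hαne] at h2
    exact h2.mono_left nhdsWithin_le_nhds
  -- piece A
  have hA : Tendsto (fun β : ℝ => β ^ (α - 1) * (β * θr β)) (𝓝[>] 0) (𝓝 θp) := by
    refine Tendsto.congr' ?_ hlim
    filter_upwards [self_mem_nhdsWithin] with β (hβ : 0 < β)
    have hb : β ^ (α - 1) * β = β ^ α := by
      rw [show β ^ (α-1) * β = β ^ (α-1) * β ^ (1:ℝ) by rw [Real.rpow_one],
        ← Real.rpow_add hβ]
      norm_num
    rw [← mul_assoc, hb]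
  -- piece B
  have hB : Tendsto (fun β : ℝ => β ^ (α - 1) * ∫ t in Ioc β p, θr t) (𝓝[>] 0)
      (𝓝 (θp / (α - 1))) := by
    rw [Metric.tendsto_nhds]
    intro ε hε
    set ε₁ : ℝ := ε * (α - 1) / 2 with hε₁def
    have hε₁ : 0 < ε₁ := by positivity
    obtain ⟨δ₀, hδ₀, hδ₀'⟩ := Metric.tendsto_nhdsWithin_nhds.1 hlim ε₁ hε₁
    set δ : ℝ := min (δ₀ / 2) p with hδdef
    have hδpos : 0 < δ := lt_min (by linarith) (by linarith)
    have hδp : δ ≤ p := min_le_right _ _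
    have hδδ₀ : δ < δ₀ := lt_of_le_of_lt (min_le_left _ _) (by linarith)
    have hbound : ∀ t : ℝ, 0 < t → t ≤ δ → |t ^ α * θr t - θp| < ε₁ := by
      intro t ht htδ
      have h := hδ₀' (x := t) ht (by rw [Real.dist_eq, sub_zero, abs_of_pos ht]; linarith)
      rwa [Real.dist_eq] at h
    have hub : ∀ t : ℝ, 0 < t → t ≤ δ → θr t ≤ (θp + ε₁) * t ^ (-α) := by
      intro t ht htδ
      have h1 := (abs_lt.1 (hbound t ht htδ)).2
      have htα : (0:ℝ) < t ^ α := Real.rpow_pos_of_pos ht α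
      rw [Real.rpow_neg ht.le, mul_comm (θp + ε₁), inv_mul_eq_div, le_div_iff₀ htα, mul_comm]
      linarith
    have hlb : ∀ t : ℝ, 0 < t → t ≤ δ → (θp - ε₁) * t ^ (-α) ≤ θr t := by
      intro t ht htδ
      have h1 := (abs_lt.1 (hbound t ht htδ)).1
      have htα : (0:ℝ) < t ^ α := Real.rpow_pos_of_pos ht α
      rw [Real.rpow_neg ht.le, mul_comm (θp - ε₁), inv_mul_eq_div, div_le_iff₀ htα, mul_comm]
      linarith
    set C : ℝ := ∫ t in Ioc δ p, θr t with hCdef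
    have hC0 : 0 ≤ C := setIntegral_nonneg measurableSet_Ioc fun t _ => hθnonneg t
    set K : ℝ := C + θp * δ ^ (1 - α) / (α - 1) with hKdef
    have hδ1α : (0:ℝ) ≤ δ ^ (1 - α) := Real.rpow_nonneg hδpos.le _
    have hKlim : Tendsto (fun β : ℝ => β ^ (α - 1) * K) (𝓝[>] 0) (𝓝 0) := by
      simpa using hrpow0.mul_const K
    have hε₁eq : ε₁ / (α - 1) = ε / 2 := by
      rw [hε₁def]; field_simp
    filter_upwards [self_mem_nhdsWithin,
      nhdsWithin_le_nhds (Iio_mem_nhds hδpos),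
      hKlim.eventually (eventually_lt_nhds (by linarith : (0:ℝ) < ε / 2))]
      with β hβ' hβδ' hKsmall
    have hβ : 0 < β := hβ'
    have hβδ : β < δ := hβδ'
    have hβα0 : (0:ℝ) ≤ β ^ (α - 1) := Real.rpow_nonneg hβ.le _
    -- split the integral
    have hsplitI : ∫ t in Ioc β p, θr t = (∫ t in Ioc β δ, θr t) + C := by
      rw [← Set.Ioc_union_Ioc_eq_Ioc hβδ.le hδp,
        setIntegral_union (Set.Ioc_disjoint_Ioc_of_le le_rfl) measurableSet_Ioc
          (hθint β δ hβ) (hθint δ p hδpos)]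
    have h0uIcc : (0:ℝ) ∉ Set.uIcc β δ := by
      rw [uIcc_of_le hβδ.le]
      exact fun h => absurd h.1 (not_le.2 hβ)
    have hrint : ∀ c : ℝ, IntegrableOn (fun t => c * t ^ (-α)) (Ioc β δ) := by
      intro c
      exact ((intervalIntegral.intervalIntegrable_rpow (Or.inr h0uIcc)).const_mul c).1
    have hJ : ∀ c : ℝ, ∫ t in Ioc β δ, c * t ^ (-α)
        = c * ((β ^ (1 - α) - δ ^ (1 - α)) / (α - 1)) := by
      intro c
      rw [← intervalIntegral.integral_of_le hβδ.le, intervalIntegral.integral_const_mul,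
        integral_rpow (Or.inr ⟨by intro h; exact hαne (by linarith), h0uIcc⟩)]
      congr 1
      rw [show -α + 1 = 1 - α by ring,
        div_eq_div_iff (by linarith : (1:ℝ) - α ≠ 0) (by linarith : α - 1 ≠ 0)]
      ring
    have hIub : ∫ t in Ioc β δ, θr t
        ≤ (θp + ε₁) * ((β ^ (1 - α) - δ ^ (1 - α)) / (α - 1)) := by
      rw [← hJ (θp + ε₁)]
      exact setIntegral_mono_on (hθint β δ hβ) (hrint _) measurableSet_Ioc
        fun t ht => hub t (hβ.trans ht.1) ht.2
    have hIlb : (θp - ε₁) * ((β ^ (1 - α) - δ ^ (1 - α)) / (α - 1))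
        ≤ ∫ t in Ioc β δ, θr t := by
      rw [← hJ (θp - ε₁)]
      exact setIntegral_mono_on (hrint _) (hθint β δ hβ) measurableSet_Ioc
        fun t ht => hlb t (hβ.trans ht.1) ht.2
    have hr1 : β ^ (α - 1) * β ^ (1 - α) = 1 := by
      rw [← Real.rpow_add hβ]
      norm_num
    obtain ⟨r, hrdef⟩ : ∃ r : ℝ, r = β ^ (α - 1) * δ ^ (1 - α) := ⟨_, rfl⟩
    have hr0 : 0 ≤ r := hrdef ▸ mul_nonneg hβα0 hδ1α
    have e1 : β ^ (α - 1) * ((θp + ε₁) * ((β ^ (1 - α) - δ ^ (1 - α)) / (α - 1)))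
        = (θp + ε₁) * (1 - r) / (α - 1) := by
      rw [hrdef]
      field_simp
      linear_combination hr1
    have e2 : β ^ (α - 1) * ((θp - ε₁) * ((β ^ (1 - α) - δ ^ (1 - α)) / (α - 1)))
        = (θp - ε₁) * (1 - r) / (α - 1) := by
      rw [hrdef]
      field_simp
      linear_combination (θp - ε₁) * hr1
    have e3 : β ^ (α - 1) * (θp * δ ^ (1 - α) / (α - 1)) = θp * r / (α - 1) := by
      rw [hrdef]; ring
    have e4 : β ^ (α - 1) * K = β ^ (α - 1) * C + β ^ (α - 1) * (θp * δ ^ (1 - α) / (α - 1)) := by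
      rw [hKdef]; ring
    have f3 : (0:ℝ) ≤ β ^ (α - 1) * C := mul_nonneg hβα0 hC0
    have f5 : (0:ℝ) ≤ β ^ (α - 1) * (θp * δ ^ (1 - α) / (α - 1)) :=
      mul_nonneg hβα0 (div_nonneg (mul_nonneg hθp.le hδ1α) hα1'.le)
    -- upper estimate
    have hupper : β ^ (α - 1) * (∫ t in Ioc β p, θr t) - θp / (α - 1)
        ≤ ε₁ / (α - 1) + β ^ (α - 1) * K := by
      rw [hsplitI, mul_add, e4]
      have h3 : β ^ (α - 1) * ∫ t in Ioc β δ, θr t ≤ (θp + ε₁) * (1 - r) / (α - 1) :=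
        e1 ▸ mul_le_mul_of_nonneg_left hIub hβα0
      have h4 : (θp + ε₁) * (1 - r) / (α - 1) ≤ (θp + ε₁) / (α - 1) := by
        refine (div_le_div_iff_of_pos_right hα1').2 ?_
        nlinarith [mul_nonneg (by linarith : (0:ℝ) ≤ θp + ε₁) hr0]
      have h5 : (θp + ε₁) / (α - 1) = θp / (α - 1) + ε₁ / (α - 1) := add_div _ _ _
      linarith
    -- lower estimate
    have hlower : θp / (α - 1) - β ^ (α - 1) * (∫ t in Ioc β p, θr t)
        ≤ ε₁ / (α - 1) + β ^ (α - 1) * K := by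
      rw [hsplitI, mul_add, e4]
      have h3 : (θp - ε₁) * (1 - r) / (α - 1) ≤ β ^ (α - 1) * ∫ t in Ioc β δ, θr t :=
        e2 ▸ mul_le_mul_of_nonneg_left hIlb hβα0
      have h7 : θp - (θp - ε₁) * (1 - r) ≤ ε₁ + θp * r := by
        nlinarith [mul_nonneg hε₁.le hr0]
      have h6 : θp / (α - 1) - (θp - ε₁) * (1 - r) / (α - 1)
          ≤ ε₁ / (α - 1) + θp * r / (α - 1) := by
        rw [← sub_div, ← add_div]
        exact (div_le_div_iff_of_pos_right hα1').2 h7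
      linarith [e3]
    rw [Real.dist_eq]
    have hKb : β ^ (α - 1) * K < ε / 2 := hKsmall
    refine abs_sub_lt_iff.2 ⟨?_, ?_⟩ <;> · rw [hε₁eq] at *; linarith
  -- combine
  have hsum := hA.add hB
  have hval : θp + θp / (α - 1) = α * θp / (α - 1) := by
    field_simp
    ring
  rw [hval] at hsum
  refine Tendsto.congr' ?_ hsum
  filter_upwards [self_mem_nhdsWithin,
    nhdsWithin_le_nhds (Iio_mem_nhds (by norm_num : (0:ℝ) < 1))]
    with β hβ' hβ1'
  have hβ : 0 < β := hβ'
  have hβ1 : β < 1 := hβ1'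
  rw [heq β hβ hβ1, mul_add]
end

section
/- Suppose F is supported in [−p,p], and β θ₊(β) → θ₊ > 0 as β → 0 (i.e., α = 1). Then d₊(β)/log(1/β) → θ₊ as β → 0, where d₊(β) = ∫_{(β,∞)} x F(dx). -/
open MeasureTheory Filter Set Topology

lemma tail_meas (F : Measure ℝ) : Measurable fun t : ℝ => F (Ioi t) :=
  Antitone.measurable (fun _ _ hst => measure_mono (Ioi_subset_Ioi hst))

lemma tail_zero (F : Measure ℝ) (p : ℝ) (hp : 1 ≤ p)
    (hsupp : F {x : ℝ | p < |x|} = 0) {t : ℝ} (ht : p ≤ t) : F (Ioi t) = 0 := by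
  refine measure_mono_null (fun x hx => ?_) hsupp
  have hx' : p < x := lt_of_le_of_lt ht hx
  have : 0 < x := lt_of_lt_of_le (lt_of_lt_of_le one_pos hp) hx'.le
  simpa [abs_of_pos this] using hx'

lemma tail_fin (F : Measure ℝ)
    (hlevy : ∫⁻ x, ENNReal.ofReal (min (x ^ 2) 1) ∂F < ⊤)
    {β : ℝ} (hβ : 0 < β) : F (Ioi β) < ⊤ := by
  have hc : (0 : ℝ) < min (β ^ 2) 1 := lt_min (pow_pos hβ 2) one_pos
  have hle : ENNReal.ofReal (min (β ^ 2) 1) * F (Ioi β)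
      ≤ ∫⁻ x, ENNReal.ofReal (min (x ^ 2) 1) ∂F := by
    calc ENNReal.ofReal (min (β ^ 2) 1) * F (Ioi β)
        = ∫⁻ _ in Ioi β, ENNReal.ofReal (min (β ^ 2) 1) ∂F := by
          rw [setLIntegral_const]
      _ ≤ ∫⁻ x in Ioi β, ENNReal.ofReal (min (x ^ 2) 1) ∂F := by
          refine setLIntegral_mono' measurableSet_Ioi fun x hx => ?_
          refine ENNReal.ofReal_le_ofReal (min_le_min ?_ le_rfl)
          have : β ≤ x := (le_of_lt hx)
          nlinarith
      _ ≤ ∫⁻ x, ENNReal.ofReal (min (x ^ 2) 1) ∂F := setLIntegral_le_lintegral _ _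
  have h0 : ENNReal.ofReal (min (β ^ 2) 1) ≠ 0 := (ENNReal.ofReal_pos.2 hc).ne'
  have hmul : F (Ioi β) * ENNReal.ofReal (min (β ^ 2) 1)
      ≤ ∫⁻ x, ENNReal.ofReal (min (x ^ 2) 1) ∂F := by rwa [mul_comm]
  have := (ENNReal.le_div_iff_mul_le (Or.inl h0) (Or.inl ENNReal.ofReal_ne_top)).2 hmul
  exact lt_of_le_of_lt this (ENNReal.div_lt_top hlevy.ne h0)

lemma M_fin (F : Measure ℝ) (p : ℝ) (hp : 1 ≤ p)
    (hsupp : F {x : ℝ | p < |x|} = 0)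
    (hlevy : ∫⁻ x, ENNReal.ofReal (min (x ^ 2) 1) ∂F < ⊤)
    {a : ℝ} (ha : 0 < a) (hap : a ≤ p) : (∫⁻ t in Ioi a, F (Ioi t)) < ⊤ := by
  rw [← Ioc_union_Ioi_eq_Ioi hap, lintegral_union measurableSet_Ioi Ioc_disjoint_Ioi_same]
  have h2 : (∫⁻ t in Ioi p, F (Ioi t)) = 0 := by
    rw [setLIntegral_congr_fun measurableSet_Ioi
      (fun t (ht : p < t) => tail_zero F p hp hsupp ht.le)]
    simp
  have h1 : (∫⁻ t in Ioc a p, F (Ioi t)) ≤ F (Ioi a) * volume (Ioc a p) := by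
    calc (∫⁻ t in Ioc a p, F (Ioi t))
        ≤ ∫⁻ _ in Ioc a p, F (Ioi a) := by
          refine setLIntegral_mono' measurableSet_Ioc fun t ht => ?_
          exact measure_mono (Ioi_subset_Ioi ht.1.le)
      _ = F (Ioi a) * volume (Ioc a p) := setLIntegral_const _ _
  rw [h2, add_zero]
  refine lt_of_le_of_lt h1 (ENNReal.mul_lt_top (tail_fin F hlevy ha) ?_)
  rw [Real.volume_Ioc]
  exact ENNReal.ofReal_lt_top

lemma log_lint (c b d : ℝ) (hc : 0 ≤ c) (hb : 0 < b) (hbd : b ≤ d) :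
    ∫⁻ t in Ioc b d, ENNReal.ofReal (c / t)
      = ENNReal.ofReal (c * (Real.log d - Real.log b)) := by
  have hd : 0 < d := lt_of_lt_of_le hb hbd
  have hint : IntegrableOn (fun t : ℝ => c / t) (Ioc b d) := by
    refine (ContinuousOn.integrableOn_compact isCompact_Icc ?_).mono_set Ioc_subset_Icc_self
    exact continuousOn_const.div continuousOn_id
      (fun t ht => ne_of_gt (lt_of_lt_of_le hb ht.1))
  have hnn : 0 ≤ᵐ[volume.restrict (Ioc b d)] fun t : ℝ => c / t := by
    refine (ae_restrict_iff' measurableSet_Ioc).2 (ae_of_all _ fun t ht => ?_)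
    exact div_nonneg hc (le_of_lt (lt_of_lt_of_le hb ht.1.le))
  rw [← ofReal_integral_eq_lintegral_ofReal hint hnn]
  congr 1
  rw [← intervalIntegral.integral_of_le hbd]
  have h0 : (0 : ℝ) ∉ Set.uIcc b d := by
    rw [Set.uIcc_of_le hbd]
    intro h
    exact absurd h.1 (not_le.2 hb)
  calc ∫ t in b..d, c / t = ∫ t in b..d, c * (1 / t) := by
        simp only [mul_one_div]
    _ = c * ∫ t in b..d, 1 / t := intervalIntegral.integral_const_mul _ _
    _ = c * (Real.log d - Real.log b) := by
        rw [integral_one_div h0, Real.log_div hd.ne' hb.ne']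

lemma decomp (F : Measure ℝ) (p : ℝ) (hp : 1 ≤ p)
    (hsupp : F {x : ℝ | p < |x|} = 0)
    (hlevy : ∫⁻ x, ENNReal.ofReal (min (x ^ 2) 1) ∂F < ⊤)
    {β : ℝ} (hβ : 0 < β) (hβp : β ≤ p) :
    (∫ x in Ioi β, x ∂F)
      = β * (F (Ioi β)).toReal + (∫⁻ t in Ioi β, F (Ioi t)).toReal := by
  have hfin := tail_fin F hlevy hβ
  have hnn : 0 ≤ᵐ[F.restrict (Ioi β)] fun x : ℝ => x := by
    filter_upwards [ae_restrict_mem measurableSet_Ioi] with x hx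
    exact le_of_lt (lt_of_lt_of_le hβ (le_of_lt hx))
  rw [integral_eq_lintegral_of_nonneg_ae hnn measurable_id.aestronglyMeasurable]
  rw [lintegral_eq_lintegral_meas_lt _ hnn measurable_id.aemeasurable]
  have hset : ∀ t : ℝ, (F.restrict (Ioi β)) {a : ℝ | t < a} = F (Ioi (max β t)) := by
    intro t
    rw [show {a : ℝ | t < a} = Ioi t from rfl, Measure.restrict_apply measurableSet_Ioi,
      Ioi_inter_Ioi, max_comm]
  have hsplit : (∫⁻ t in Ioi (0:ℝ), (F.restrict (Ioi β)) {a : ℝ | t < a})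
      = ENNReal.ofReal β * F (Ioi β) + ∫⁻ t in Ioi β, F (Ioi t) := by
    rw [← Ioc_union_Ioi_eq_Ioi hβ.le,
      lintegral_union measurableSet_Ioi Ioc_disjoint_Ioi_same]
    congr 1
    · rw [setLIntegral_congr_fun measurableSet_Ioc
        (fun t (ht : t ∈ Ioc 0 β) => by
          rw [hset t, max_eq_left ht.2])]
      rw [setLIntegral_const, Real.volume_Ioc, sub_zero, mul_comm]
    · exact setLIntegral_congr_fun measurableSet_Ioi
        (fun t (ht : β < t) => by rw [hset t, max_eq_right ht.le])
  rw [hsplit, ENNReal.toReal_add, ENNReal.toReal_mul, ENNReal.toReal_ofReal hβ.le]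
  · exact ENNReal.mul_ne_top ENNReal.ofReal_ne_top hfin.ne
  · exact (M_fin F p hp hsupp hlevy hβ hβp).ne

/-- Under (H2-1) on the positive side with `θ₊ > 0`,
`d₊(β) = ∫_{(β,∞)} x F(dx)` satisfies `d₊(β)/log(1/β) → θ₊` as `β → 0`. -/
theorem stmt7 (F : Measure ℝ) (p θp : ℝ) (hp : 1 ≤ p)
    (hsupp : F {x : ℝ | p < |x|} = 0)
    (hlevy : ∫⁻ x, ENNReal.ofReal (min (x ^ 2) 1) ∂F < ⊤)
    (hθp : 0 < θp)
    (hlim : Tendsto (fun β : ℝ => β * (F (Ioi β)).toReal) (𝓝[>] 0) (𝓝 θp)) :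
    Tendsto (fun β : ℝ => (∫ x in Ioi β, x ∂F) / Real.log (1 / β))
      (𝓝[>] 0) (𝓝 θp) := by
  have htop : Tendsto (fun β : ℝ => Real.log (1 / β)) (𝓝[>] 0) atTop := by
    have : (fun β : ℝ => Real.log (1 / β)) = fun β : ℝ => -Real.log β := by
      funext β; rw [one_div, Real.log_inv]
    rw [this]
    exact tendsto_neg_atTop_iff.2 Real.tendsto_log_nhdsGT_zero
  rw [Metric.tendsto_nhds]
  intro ε hε
  set ε' : ℝ := min (ε / 4) θp with hε'def
  have hε' : 0 < ε' := lt_min (by linarith) hθp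
  have hε'le : ε' ≤ ε / 4 := min_le_left _ _
  have hε'θ : ε' ≤ θp := min_le_right _ _
  -- get δ from hlim
  have hh := Metric.tendsto_nhds.1 hlim ε' hε'
  obtain ⟨δ₀, hδ₀pos, hδ₀⟩ := mem_nhdsGT_iff_exists_Ioc_subset.1 hh
  set δ : ℝ := min δ₀ 1 with hδdef
  have hδpos : 0 < δ := lt_min hδ₀pos one_pos
  have hδ1 : δ ≤ 1 := min_le_right _ _
  have hδp : δ ≤ p := hδ1.trans hp
  have hδbound : ∀ t ∈ Ioc (0:ℝ) δ, |t * (F (Ioi t)).toReal - θp| < ε' := by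
    intro t ht
    have h := hδ₀ ⟨ht.1, ht.2.trans (min_le_left _ _)⟩
    simpa [Real.dist_eq] using h
  set C : ℝ := (∫⁻ t in Ioi δ, F (Ioi t)).toReal with hCdef
  have hC0 : 0 ≤ C := ENNReal.toReal_nonneg
  set K : ℝ := (θp + ε') + (θp + ε') * |Real.log δ| + C with hKdef
  have hK0 : 0 ≤ K := by positivity
  have hsmall : ∀ᶠ β in 𝓝[>] (0:ℝ), K / Real.log (1 / β) < ε / 2 := by
    have := Metric.tendsto_nhds.1 (Tendsto.div_atTop (tendsto_const_nhds (x := K)) htop) (ε / 2) (by linarith)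
    filter_upwards [this] with β hβ
    rw [Real.dist_eq, sub_zero] at hβ
    exact lt_of_le_of_lt (le_abs_self _) hβ
  filter_upwards [hsmall, Ioo_mem_nhdsGT hδpos] with β hsm hβmem
  obtain ⟨hβpos, hβδ⟩ := hβmem
  have hβ1 : β < 1 := lt_of_lt_of_le hβδ hδ1
  set ℓ : ℝ := Real.log (1 / β) with hℓdef
  have hℓpos : 0 < ℓ := Real.log_pos (one_lt_one_div hβpos hβ1)
  have hℓeq : ℓ = -Real.log β := by rw [hℓdef, one_div, Real.log_inv]
  set G : ℝ → ℝ := fun t => (F (Ioi t)).toReal with hGdef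
  -- bounds on middle lintegral
  have hMfin := M_fin F p hp hsupp hlevy hβpos (hβδ.le.trans hδp)
  have hsplit : (∫⁻ t in Ioi β, F (Ioi t))
      = (∫⁻ t in Ioc β δ, F (Ioi t)) + ∫⁻ t in Ioi δ, F (Ioi t) := by
    rw [← lintegral_union measurableSet_Ioi Ioc_disjoint_Ioi_same,
      Ioc_union_Ioi_eq_Ioi hβδ.le]
  have hmid_fin : (∫⁻ t in Ioc β δ, F (Ioi t)) ≠ ⊤ := by
    refine ne_of_lt (lt_of_le_of_lt ?_ hMfin)
    rw [hsplit]; exact le_self_add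
  have htail_fin : (∫⁻ t in Ioi δ, F (Ioi t)) ≠ ⊤ :=
    (M_fin F p hp hsupp hlevy hδpos hδp).ne
  have hlogle : Real.log β ≤ Real.log δ := Real.log_le_log hβpos hβδ.le
  -- upper bound
  have hupper_mid : (∫⁻ t in Ioc β δ, F (Ioi t))
      ≤ ENNReal.ofReal ((θp + ε') * (Real.log δ - Real.log β)) := by
    rw [← log_lint (θp + ε') β δ (by linarith) hβpos hβδ.le]
    refine setLIntegral_mono' measurableSet_Ioc fun t ht => ?_
    have htpos : 0 < t := hβpos.trans ht.1
    have hb := hδbound t ⟨htpos, ht.2⟩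
    have h1 : t * G t ≤ θp + ε' := by
      have := abs_lt.1 hb
      linarith [this.2]
    have h2 : G t ≤ (θp + ε') / t := (le_div_iff₀ htpos).2 (by rwa [mul_comm] at h1)
    calc F (Ioi t) = ENNReal.ofReal (G t) :=
          (ENNReal.ofReal_toReal (tail_fin F hlevy htpos).ne).symm
      _ ≤ ENNReal.ofReal ((θp + ε') / t) := ENNReal.ofReal_le_ofReal h2
  have hlower_mid : ENNReal.ofReal ((θp - ε') * (Real.log δ - Real.log β))
      ≤ ∫⁻ t in Ioc β δ, F (Ioi t) := by
    rw [← log_lint (θp - ε') β δ (by linarith) hβpos hβδ.le]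
    refine setLIntegral_mono' measurableSet_Ioc fun t ht => ?_
    have htpos : 0 < t := hβpos.trans ht.1
    have hb := hδbound t ⟨htpos, ht.2⟩
    have h1 : θp - ε' ≤ t * G t := by
      have := abs_lt.1 hb
      linarith [this.1]
    have h2 : (θp - ε') / t ≤ G t := (div_le_iff₀ htpos).2 (by rwa [mul_comm] at h1)
    calc ENNReal.ofReal ((θp - ε') / t) ≤ ENNReal.ofReal (G t) :=
          ENNReal.ofReal_le_ofReal h2
      _ = F (Ioi t) := ENNReal.ofReal_toReal (tail_fin F hlevy htpos).ne
  set L : ℝ := (∫⁻ t in Ioi β, F (Ioi t)).toReal with hLdef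
  have hLupper : L ≤ (θp + ε') * (Real.log δ - Real.log β) + C := by
    rw [hLdef, hsplit, ENNReal.toReal_add hmid_fin htail_fin]
    refine add_le_add ?_ le_rfl
    exact ENNReal.toReal_le_of_le_ofReal
      (mul_nonneg (by linarith) (by linarith)) hupper_mid
  have hLlower : (θp - ε') * (Real.log δ - Real.log β) ≤ L := by
    have hmle : (∫⁻ t in Ioc β δ, F (Ioi t)) ≤ ∫⁻ t in Ioi β, F (Ioi t) := by
      rw [hsplit]; exact le_self_add
    exact (ENNReal.ofReal_le_iff_le_toReal hMfin.ne).1 (le_trans hlower_mid hmle)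
  -- bound on β * G β
  have hβG : 0 ≤ β * G β ∧ β * G β ≤ θp + ε' := by
    constructor
    · exact mul_nonneg hβpos.le ENNReal.toReal_nonneg
    · have := abs_lt.1 (hδbound β ⟨hβpos, hβδ.le⟩)
      linarith [this.2]
  have hd : (∫ x in Ioi β, x ∂F) = β * G β + L :=
    decomp F p hp hsupp hlevy hβpos (hβδ.le.trans hδp)
  set d : ℝ := ∫ x in Ioi β, x ∂F with hddef
  -- algebra
  have habslog : Real.log δ ≤ |Real.log δ| := le_abs_self _
  have habslog' : -|Real.log δ| ≤ Real.log δ := neg_abs_le _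
  have hdu : d ≤ (θp + ε') * ℓ + K := by
    rw [hd]
    have h1 : (θp + ε') * (Real.log δ - Real.log β)
        ≤ (θp + ε') * ℓ + (θp + ε') * |Real.log δ| := by
      rw [hℓeq]; nlinarith [hε'.le, hθp.le]
    linarith [hβG.2, hLupper]
  have hdl : (θp - ε') * ℓ - K ≤ d := by
    rw [hd]
    have h1 : (θp - ε') * ℓ - K ≤ (θp - ε') * (Real.log δ - Real.log β) := by
      rw [hℓeq]
      have h2 : (θp - ε') * |Real.log δ| ≤ (θp + ε') * |Real.log δ| := by
        apply mul_le_mul_of_nonneg_right (by linarith) (abs_nonneg _)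
      nlinarith [sub_nonneg.2 hε'θ]
    linarith [hβG.1, hLlower]
  have hup : d / ℓ ≤ θp + ε' + K / ℓ := by
    rw [div_le_iff₀ hℓpos]
    have : (θp + ε' + K / ℓ) * ℓ = (θp + ε') * ℓ + K := by
      field_simp
    linarith [hdu]
  have hlo : θp - ε' - K / ℓ ≤ d / ℓ := by
    rw [le_div_iff₀ hℓpos]
    have : (θp - ε' - K / ℓ) * ℓ = (θp - ε') * ℓ - K := by
      field_simp
      try ring
    linarith [hdl]
  rw [Real.dist_eq]
  have : |d / ℓ - θp| ≤ ε' + K / ℓ := abs_le.2 ⟨by linarith, by linarith⟩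
  linarith [hsm]
end

section
/- Suppose F is supported in [−p,p], and β θ₊(β) → θ₊ as β → 0 (α = 1 case). Then for every fixed a ∈ (0,1], (1/(log(1/β))²) ∫_{(β,a]} x log x F(dx) → −θ₊/2 as β → 0. -/
open MeasureTheory Filter Set Topology



lemma fin_tail (F : Measure ℝ) (p : ℝ) (hp : 1 ≤ p)
    (hsupp : F {x : ℝ | p < |x|} = 0)
    (hlevy : ∫⁻ x, ENNReal.ofReal (min (x ^ 2) 1) ∂F < ⊤)
    {b : ℝ} (hb : 0 < b) : F (Ioi b) < ⊤ := by
  have h1 : F (Ioi p) = 0 := by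
    refine measure_mono_null (fun x hx => ?_) hsupp
    have : (0:ℝ) < p := lt_of_lt_of_le one_pos hp
    have hx' : p < x := hx
    simpa [abs_of_pos (this.trans hx')] using hx'
  have hsplit : F (Ioi b) ≤ F (Ioc b p) + F (Ioi p) :=
    le_trans (measure_mono (by
      intro x hx
      rcases le_or_gt x p with h | h
      · exact Or.inl ⟨hx, h⟩
      · exact Or.inr h)) (measure_union_le _ _)
  have hc : (0:ℝ) < min (b^2) 1 := lt_min (by positivity) one_pos
  have key : ENNReal.ofReal (min (b^2) 1) * F (Ioc b p) ≤ ∫⁻ x, ENNReal.ofReal (min (x ^ 2) 1) ∂F := by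
    rw [← setLIntegral_const (Ioc b p) _]
    calc ∫⁻ _ in Ioc b p, ENNReal.ofReal (min (b^2) 1) ∂F
        ≤ ∫⁻ x in Ioc b p, ENNReal.ofReal (min (x ^ 2) 1) ∂F := by
          refine setLIntegral_mono (ENNReal.measurable_ofReal.comp
            ((measurable_id.pow_const 2).min measurable_const)) (fun x hx => ?_)
          refine ENNReal.ofReal_le_ofReal (le_min (le_trans (min_le_left _ _) ?_) (min_le_right _ _))
          exact pow_le_pow_left₀ hb.le hx.1.le 2
      _ ≤ ∫⁻ x, ENNReal.ofReal (min (x ^ 2) 1) ∂F := setLIntegral_le_lintegral _ _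
  have hfin : F (Ioc b p) < ⊤ := by
    by_contra h
    push_neg at h
    have : F (Ioc b p) = ⊤ := top_le_iff.mp h
    rw [this, ENNReal.mul_top (by simp only [ne_eq, ENNReal.ofReal_eq_zero, not_le]; exact hc)] at key
    exact (lt_irrefl ⊤ (lt_of_le_of_lt key hlevy))
  calc F (Ioi b) ≤ F (Ioc b p) + F (Ioi p) := hsplit
    _ < ⊤ := by rw [h1, add_zero]; exact hfin


lemma theta_aemeas (F : Measure ℝ) {b c : ℝ} (hfin : F (Ioi b) < ⊤) :
    AEMeasurable (fun t => (F (Ioi t)).toReal) (volume.restrict (Ioc b c)) := by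
  have hanti : Antitone (fun t => (F (Ioi (max t b))).toReal) := by
    intro s t hst
    refine ENNReal.toReal_mono ?_ (measure_mono (Ioi_subset_Ioi (max_le_max hst le_rfl)))
    exact (lt_of_le_of_lt (measure_mono (Ioi_subset_Ioi (le_max_right s b))) hfin).ne
  refine (hanti.measurable.aemeasurable).congr ?_
  filter_upwards [ae_restrict_mem measurableSet_Ioc] with t ht
  rw [max_eq_left ht.1.le]

lemma integ_theta (F : Measure ℝ) {b c : ℝ} (hb : 0 < b) (hb1 : b ≤ 1) (hc : c ≤ 1)
    (hfin : F (Ioi b) < ⊤) :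
    IntegrableOn (fun t => (Real.log t + 1) * (F (Ioi t)).toReal) (Ioc b c) volume := by
  have hmeas : AEMeasurable (fun t => (Real.log t + 1) * (F (Ioi t)).toReal)
      (volume.restrict (Ioc b c)) :=
    ((Real.measurable_log.add measurable_const).aemeasurable).mul (theta_aemeas F hfin)
  refine Integrable.mono' (g := fun _ => (|Real.log b| + 1) * (F (Ioi b)).toReal)
    (integrable_const _) hmeas.aestronglyMeasurable ?_
  filter_upwards [ae_restrict_mem measurableSet_Ioc] with t ht
  rw [Real.norm_eq_abs, abs_mul]
  have hlogb : Real.log b ≤ 0 := Real.log_nonpos hb.le hb1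
  have hlogt1 : Real.log t ≤ 0 := Real.log_nonpos (hb.trans ht.1).le (ht.2.trans hc)
  have hlogt2 : Real.log b ≤ Real.log t := Real.log_le_log hb ht.1.le
  have h1 : |Real.log t + 1| ≤ |Real.log b| + 1 := by
    rw [abs_of_nonpos hlogb]
    rcases abs_cases (Real.log t + 1) with ⟨h, _⟩ | ⟨h, _⟩ <;> linarith
  have h2 : (F (Ioi t)).toReal ≤ (F (Ioi b)).toReal :=
    ENNReal.toReal_mono hfin.ne (measure_mono (Ioi_subset_Ioi ht.1.le))
  rw [abs_of_nonneg (ENNReal.toReal_nonneg : (0:ℝ) ≤ (F (Ioi t)).toReal)]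
  exact mul_le_mul h1 h2 ENNReal.toReal_nonneg (by positivity)


lemma ftc_tlogt {b c : ℝ} (hb : 0 < b) (hbc : b ≤ c) :
    ∫ t in Ioc b c, (Real.log t + 1) = c * Real.log c - b * Real.log b := by
  rw [← intervalIntegral.integral_of_le hbc]
  have : ∀ t ∈ uIcc b c, HasDerivAt (fun t => t * Real.log t) (Real.log t + 1) t := by
    intro t ht
    have htpos : 0 < t := lt_of_lt_of_le hb (by
      rw [uIcc_of_le hbc] at ht; exact ht.1)
    have h1 : HasDerivAt Real.log t⁻¹ t := Real.hasDerivAt_log htpos.ne'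
    have := (hasDerivAt_id t).mul h1
    convert this using 1
    · rfl
    · rfl
    · rfl
    · simp [htpos.ne']
  rw [intervalIntegral.integral_eq_sub_of_hasDerivAt this ?_]
  refine (ContinuousOn.add (Real.continuousOn_log.mono ?_) continuousOn_const).intervalIntegrable
  intro t ht
  rw [uIcc_of_le hbc] at ht
  exact ne_of_gt (lt_of_lt_of_le hb ht.1)

lemma ftc_logsq {b c : ℝ} (hb : 0 < b) (hbc : b ≤ c) :
    ∫ t in Ioc b c, (Real.log t + 1) / t =
      ((Real.log c) ^ 2 / 2 + Real.log c) - ((Real.log b) ^ 2 / 2 + Real.log b) := by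
  rw [← intervalIntegral.integral_of_le hbc]
  have : ∀ t ∈ uIcc b c, HasDerivAt (fun t => (Real.log t) ^ 2 / 2 + Real.log t)
      ((Real.log t + 1) / t) t := by
    intro t ht
    have htpos : 0 < t := lt_of_lt_of_le hb (by rw [uIcc_of_le hbc] at ht; exact ht.1)
    have h1 : HasDerivAt Real.log t⁻¹ t := Real.hasDerivAt_log htpos.ne'
    have h2 := ((h1.pow 2).div_const 2).add h1
    convert h2 using 1
    · rfl
    · rfl
    · rfl
    · norm_num
      field_simp
  rw [intervalIntegral.integral_eq_sub_of_hasDerivAt this ?_]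
  have hcont : ContinuousOn (fun t => (Real.log t + 1) / t) (uIcc b c) := by
    refine ContinuousOn.div ((Real.continuousOn_log.mono ?_).add continuousOn_const)
      continuousOn_id ?_
    · intro t ht; rw [uIcc_of_le hbc] at ht; exact ne_of_gt (lt_of_lt_of_le hb ht.1)
    · intro t ht; rw [uIcc_of_le hbc] at ht; exact ne_of_gt (lt_of_lt_of_le hb ht.1)
  exact hcont.intervalIntegrable

lemma key_identity (F : Measure ℝ) {β a : ℝ} (hβ : 0 < β) (hβa : β < a) (ha1 : a ≤ 1)
    (hfin : F (Ioi β) < ⊤) :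
    ∫ x in Ioc β a, x * Real.log x ∂F
      = (∫ t in Ioc β a, (Real.log t + 1) * (F (Ioi t)).toReal)
        + (F (Ioi β)).toReal * (β * Real.log β)
        - (F (Ioi a)).toReal * (a * Real.log a) := by
  have ha0 : 0 < a := hβ.trans hβa
  set ν : Measure ℝ := F.restrict (Ioc β a) with hν
  set μ' : Measure ℝ := volume.restrict (Ioc β 1) with hμ'
  haveI hνfin : IsFiniteMeasure ν := by
    constructor
    rw [hν, Measure.restrict_apply_univ]
    exact lt_of_le_of_lt (measure_mono Ioc_subset_Ioi_self) hfin
  haveI : IsFiniteMeasure μ' := by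
    constructor
    rw [hμ', Measure.restrict_apply_univ]
    exact measure_Ioc_lt_top
  set f : ℝ → ℝ → ℝ := fun x t => if x ≤ t ∧ β < t ∧ t ≤ 1 then Real.log t + 1 else 0 with hf
  -- integrability of uncurry f on product
  have hfmeas : Measurable (Function.uncurry f) := by
    have hset : MeasurableSet {q : ℝ × ℝ | q.1 ≤ q.2 ∧ β < q.2 ∧ q.2 ≤ 1} := by
      refine ((measurableSet_le measurable_fst measurable_snd).inter
        (MeasurableSet.inter ?_ ?_))
      · exact measurable_snd measurableSet_Ioi
      · exact measurable_snd measurableSet_Iic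
    have : Function.uncurry f = fun q : ℝ × ℝ =>
        Set.indicator {q : ℝ × ℝ | q.1 ≤ q.2 ∧ β < q.2 ∧ q.2 ≤ 1}
          (fun q => Real.log q.2 + 1) q := by
      ext q
      simp [Function.uncurry, hf, Set.indicator_apply, mem_setOf_eq]
    rw [this]
    exact ((Real.measurable_log.comp measurable_snd).add measurable_const).indicator hset
  have hfint : Integrable (Function.uncurry f) (ν.prod μ') := by
    refine Integrable.mono' (g := fun _ => |Real.log β| + 1) (integrable_const _)
      hfmeas.aestronglyMeasurable ?_
    refine Eventually.of_forall (fun q => ?_)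
    rw [Real.norm_eq_abs]
    by_cases h : q.1 ≤ q.2 ∧ β < q.2 ∧ q.2 ≤ 1
    · have h1 : Real.log β ≤ Real.log q.2 := Real.log_le_log hβ h.2.1.le
      have h2 : Real.log q.2 ≤ 0 := Real.log_nonpos (hβ.trans h.2.1).le h.2.2
      have h3 : Real.log β ≤ 0 := h1.trans h2
      simp only [Function.uncurry, hf, if_pos h]
      rw [abs_of_nonpos h3]
      rcases abs_cases (Real.log q.2 + 1) with ⟨he, _⟩ | ⟨he, _⟩ <;> linarith
    · simp only [Function.uncurry, hf, if_neg h, abs_zero]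
      positivity
  -- decomposition of tail measure
  have hθfin : ∀ t : ℝ, β ≤ t → F (Ioi t) < ⊤ :=
    fun t ht => lt_of_le_of_lt (measure_mono (Ioi_subset_Ioi ht)) hfin
  have hdecomp : ∀ t : ℝ, β ≤ t →
      (F (Ioc β t)).toReal = (F (Ioi β)).toReal - (F (Ioi t)).toReal := by
    intro t ht
    have hU : F (Ioi β) = F (Ioc β t) + F (Ioi t) := by
      rw [← measure_union (Ioc_disjoint_Ioi le_rfl) measurableSet_Ioi,
        Ioc_union_Ioi_eq_Ioi ht]
    rw [hU, ENNReal.toReal_add (lt_of_le_of_lt (measure_mono Ioc_subset_Ioi_self) hfin).ne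
      (hθfin t ht).ne]
    ring
  -- step B : rewrite integrand
  have stepB : ∫ x in Ioc β a, x * Real.log x ∂F = ∫ x, (- ∫ t, f x t ∂μ') ∂ν := by
    refine (integral_congr_ae ?_)
    filter_upwards [ae_restrict_mem measurableSet_Ioc] with x hx
    have hx0 : 0 < x := hβ.trans hx.1
    have hx1 : x ≤ 1 := hx.2.trans ha1
    have hfx : f x = Set.indicator (Icc x 1) (fun t => Real.log t + 1) := by
      ext t
      simp only [hf, Set.indicator_apply, mem_Icc]
      by_cases h : x ≤ t ∧ t ≤ 1
      · rw [if_pos ⟨h.1, lt_of_lt_of_le hx.1 h.1, h.2⟩, if_pos h]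
      · rw [if_neg (fun hcon => h ⟨hcon.1, hcon.2.2⟩), if_neg h]
    have hinner : ∫ t, f x t ∂μ' = - (x * Real.log x) := by
      rw [hfx, integral_indicator measurableSet_Icc, hμ',
        Measure.restrict_restrict measurableSet_Icc,
        Set.inter_eq_self_of_subset_left (fun t ht => by
          rw [mem_Ioc]; rw [mem_Icc] at ht; exact ⟨lt_of_lt_of_le hx.1 ht.1, ht.2⟩),
        integral_Icc_eq_integral_Ioc, ftc_tlogt hx0 hx1]
      simp
    rw [hinner, neg_neg]
  -- swap
  have hswap : ∫ x, ∫ t, f x t ∂μ' ∂ν = ∫ t, ∫ x, f x t ∂ν ∂μ' :=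
    integral_integral_swap hfint
  -- inner integral in x
  set G : ℝ → ℝ := fun t => (Real.log t + 1) * (ν (Iic t)).toReal with hG
  have hinnerx : ∀ t ∈ Ioc β 1, ∫ x, f x t ∂ν = G t := by
    intro t ht
    have hft : (fun x => f x t) = Set.indicator (Iic t) (fun _ => Real.log t + 1) := by
      ext x
      simp only [hf, Set.indicator_apply, mem_Iic]
      by_cases h : x ≤ t
      · rw [if_pos ⟨h, ht.1, ht.2⟩, if_pos h]
      · rw [if_neg (fun hcon => h hcon.1), if_neg h]
    rw [hft, integral_indicator measurableSet_Iic, setIntegral_const, hG, smul_eq_mul, mul_comm]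
    rfl
  have hGcongr : (fun t => ∫ x, f x t ∂ν) =ᵐ[μ'] G := by
    rw [hμ']
    filter_upwards [ae_restrict_mem measurableSet_Ioc] with t ht
    exact hinnerx t ht
  have hGint : Integrable G μ' := (hfint.integral_prod_right).congr hGcongr
  have hstepC : ∫ t, ∫ x, f x t ∂ν ∂μ' = ∫ t in Ioc β 1, G t := integral_congr_ae hGcongr
  -- split the t-integral
  have hsplit : ∫ t in Ioc β 1, G t = (∫ t in Ioc β a, G t) + ∫ t in Ioc a 1, G t := by
    rw [← setIntegral_union (Ioc_disjoint_Ioc_of_le le_rfl) measurableSet_Ioc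
      (hGint.mono_measure (Measure.restrict_mono (Ioc_subset_Ioc_right ha1) le_rfl))
      (hGint.mono_measure (Measure.restrict_mono (Ioc_subset_Ioc_left hβa.le) le_rfl)),
      Ioc_union_Ioc_eq_Ioc hβa.le ha1]
  have hβ1 : β ≤ 1 := le_trans hβa.le ha1
  have hlogint : IntegrableOn (fun t => Real.log t + 1) (Ioc β a) volume := by
    refine IntegrableOn.mono_set ?_ Ioc_subset_Icc_self
    refine ContinuousOn.integrableOn_Icc ?_
    refine (Real.continuousOn_log.mono ?_).add continuousOn_const
    intro t ht
    exact ne_of_gt (lt_of_lt_of_le hβ ht.1)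
  -- part 1
  have part1 : ∫ t in Ioc β a, G t
      = (F (Ioi β)).toReal * (a * Real.log a - β * Real.log β)
        - ∫ t in Ioc β a, (Real.log t + 1) * (F (Ioi t)).toReal := by
    have he : ∀ t ∈ Ioc β a, G t
        = (F (Ioi β)).toReal * (Real.log t + 1)
          - (Real.log t + 1) * (F (Ioi t)).toReal := by
      intro t ht
      have hIic : Iic t ∩ Ioc β a = Ioc β t := by
        ext x
        simp only [mem_inter_iff, mem_Iic, mem_Ioc]
        constructor
        · rintro ⟨h1, h2, h3⟩; exact ⟨h2, h1⟩
        · rintro ⟨h1, h2⟩; exact ⟨h2, h1, h2.trans ht.2⟩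
      rw [hG]
      simp only
      rw [hν, Measure.restrict_apply measurableSet_Iic, hIic, hdecomp t ht.1.le]
      ring
    rw [setIntegral_congr_fun measurableSet_Ioc he,
      integral_sub ((hlogint.const_mul _)) (integ_theta F hβ hβ1 ha1 hfin),
      integral_const_mul, ftc_tlogt hβ hβa.le]
  -- part 2
  have part2 : ∫ t in Ioc a 1, G t
      = ((F (Ioi β)).toReal - (F (Ioi a)).toReal) * (- (a * Real.log a)) := by
    have he : ∀ t ∈ Ioc a 1, G t
        = (Real.log t + 1) * ((F (Ioi β)).toReal - (F (Ioi a)).toReal) := by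
      intro t ht
      have hIic : Iic t ∩ Ioc β a = Ioc β a := by
        refine inter_eq_self_of_subset_right (fun x hx => ?_)
        rw [mem_Iic]
        exact le_trans (mem_Ioc.mp hx).2 ht.1.le
      rw [hG]
      simp only
      rw [hν, Measure.restrict_apply measurableSet_Iic, hIic, hdecomp a hβa.le]
    rw [setIntegral_congr_fun measurableSet_Ioc he, integral_mul_const,
      ftc_tlogt ha0 ha1]
    rw [Real.log_one]
    ring
  rw [stepB, integral_neg, hswap, hstepC, hsplit, part1, part2]
  ring

-- basic limits
lemma lim_invlog : Tendsto (fun β : ℝ => 1 / Real.log (1 / β)) (𝓝[>] 0) (𝓝 0) := by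
  have h1 : Tendsto (fun β : ℝ => Real.log (1 / β)) (𝓝[>] 0) atTop := by
    refine Real.tendsto_log_atTop.comp ?_
    exact (tendsto_inv_nhdsGT_zero : Tendsto (fun x : ℝ => x⁻¹) (𝓝[>] (0:ℝ)) atTop).congr
      (fun x => (one_div x).symm)
  simpa only [one_div, Pi.inv_def] using h1.inv_tendsto_atTop

lemma lim_invlogsq : Tendsto (fun β : ℝ => 1 / (Real.log (1 / β)) ^ 2) (𝓝[>] 0) (𝓝 0) := by
  have h1 : Tendsto (fun β : ℝ => Real.log (1 / β)) (𝓝[>] 0) atTop := by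
    refine Real.tendsto_log_atTop.comp ?_
    exact (tendsto_inv_nhdsGT_zero : Tendsto (fun x : ℝ => x⁻¹) (𝓝[>] (0:ℝ)) atTop).congr
      (fun x => (one_div x).symm)
  have h2 : Tendsto (fun β : ℝ => (Real.log (1 / β)) ^ 2) (𝓝[>] 0) atTop :=
    h1.atTop_mul_atTop₀ h1 |>.congr (fun β => (sq (Real.log (1/β))).symm)
  simpa only [one_div, Pi.inv_def] using h2.inv_tendsto_atTop

lemma main_term (F : Measure ℝ) (θp : ℝ) {a : ℝ}
    (hfin : ∀ b : ℝ, 0 < b → F (Ioi b) < ⊤)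
    (ha0 : 0 < a) (ha1 : a ≤ 1)
    (hlim : Tendsto (fun β : ℝ => β * (F (Ioi β)).toReal) (𝓝[>] 0) (𝓝 θp)) :
    Tendsto (fun β : ℝ =>
        (1 / (Real.log (1 / β)) ^ 2) * ∫ t in Ioc β a, (Real.log t + 1) * (F (Ioi t)).toReal)
      (𝓝[>] 0) (𝓝 (-(θp / 2))) := by
  rw [Metric.tendsto_nhds]
  intro ε hε
  set ε' : ℝ := ε / 4 with hε'def
  have hε' : 0 < ε' := by positivity
  have hev := Metric.tendsto_nhds.mp hlim ε' hε'
  rw [eventually_nhdsWithin_iff, Metric.eventually_nhds_iff] at hev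
  obtain ⟨δ₀, hδ₀pos, hδ₀⟩ := hev
  set δ : ℝ := min (min (δ₀ / 2) a) (Real.exp (-1)) with hδdef
  have hδpos : 0 < δ := lt_min (lt_min (by positivity) ha0) (Real.exp_pos _)
  have hδa : δ ≤ a := le_trans (min_le_left _ _) (min_le_right _ _)
  have hδe : δ ≤ Real.exp (-1) := min_le_right _ _
  have hδδ₀ : δ < δ₀ := lt_of_le_of_lt (le_trans (min_le_left _ _) (min_le_left _ _))
    (by linarith)
  have hδ1 : δ ≤ 1 := le_trans hδe (by
    calc Real.exp (-1) ≤ Real.exp 0 := Real.exp_le_exp.mpr (by norm_num)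
      _ = 1 := Real.exp_zero)
  -- bounds on θ for t ∈ (0, δ]
  have hbound : ∀ t : ℝ, 0 < t → t ≤ δ →
      (θp - ε') / t ≤ (F (Ioi t)).toReal ∧ (F (Ioi t)).toReal ≤ (θp + ε') / t := by
    intro t ht0 htδ
    have hd : dist t 0 < δ₀ := by
      rw [Real.dist_eq, sub_zero, abs_of_pos ht0]
      exact lt_of_le_of_lt htδ hδδ₀
    have := hδ₀ hd ht0
    rw [Real.dist_eq, abs_lt] at this
    constructor
    · rw [div_le_iff₀ ht0]
      nlinarith [this.1]
    · rw [le_div_iff₀ ht0]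
      nlinarith [this.2]
  -- constant C
  set C : ℝ := ∫ t in Ioc δ a, (Real.log t + 1) * (F (Ioi t)).toReal with hC
  set K : ℝ := (Real.log δ) ^ 2 / 2 + Real.log δ with hK
  -- the two comparison functions tend to their limits
  have hUB : Tendsto (fun β : ℝ => (θp - ε') * (K * (1 / (Real.log (1/β))^2) - 1/2
      + (1 / Real.log (1/β))) + C * (1 / (Real.log (1/β))^2)) (𝓝[>] 0)
      (𝓝 ((θp - ε') * (-(1/2)))) := by
    have : Tendsto (fun β : ℝ => K * (1 / (Real.log (1/β))^2) - 1/2 + (1 / Real.log (1/β)))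
        (𝓝[>] 0) (𝓝 (K * 0 - 1/2 + 0)) :=
      ((lim_invlogsq.const_mul K).sub_const _).add lim_invlog
    have h2 := (this.const_mul (θp - ε')).add (lim_invlogsq.const_mul C)
    simpa using h2
  have hLB : Tendsto (fun β : ℝ => (θp + ε') * (K * (1 / (Real.log (1/β))^2) - 1/2
      + (1 / Real.log (1/β))) + C * (1 / (Real.log (1/β))^2)) (𝓝[>] 0)
      (𝓝 ((θp + ε') * (-(1/2)))) := by
    have : Tendsto (fun β : ℝ => K * (1 / (Real.log (1/β))^2) - 1/2 + (1 / Real.log (1/β)))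
        (𝓝[>] 0) (𝓝 (K * 0 - 1/2 + 0)) :=
      ((lim_invlogsq.const_mul K).sub_const _).add lim_invlog
    have h2 := (this.const_mul (θp + ε')).add (lim_invlogsq.const_mul C)
    simpa using h2
  have hUBev := Metric.tendsto_nhds.mp hUB ε' hε'
  have hLBev := Metric.tendsto_nhds.mp hLB ε' hε'
  filter_upwards [hUBev, hLBev, Ioo_mem_nhdsGT_of_mem (⟨le_rfl, hδpos⟩ : (0:ℝ) ∈ Ico 0 δ)]
    with β hUBβ hLBβ hβmem
  obtain ⟨hβ0, hβδ⟩ := hβmem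
  have hβ1 : β < 1 := lt_of_lt_of_le hβδ hδ1
  have hβa : β < a := lt_of_lt_of_le hβδ hδa
  set L : ℝ := Real.log (1 / β) with hL
  have hLlog : L = - Real.log β := by rw [hL, one_div, Real.log_inv]
  have hLpos : 0 < L := by
    rw [hLlog, neg_pos]
    exact Real.log_neg hβ0 hβ1
  -- split M β = I + C
  have hIθa : IntegrableOn (fun t => (Real.log t + 1) * (F (Ioi t)).toReal) (Ioc β a) volume :=
    integ_theta F hβ0 hβ1.le ha1 (hfin β hβ0)
  have hsplit : ∫ t in Ioc β a, (Real.log t + 1) * (F (Ioi t)).toReal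
      = (∫ t in Ioc β δ, (Real.log t + 1) * (F (Ioi t)).toReal) + C := by
    rw [hC, ← setIntegral_union (Ioc_disjoint_Ioc_of_le le_rfl) measurableSet_Ioc
      (hIθa.mono_set (Ioc_subset_Ioc_right hδa)) (hIθa.mono_set (Ioc_subset_Ioc_left hβδ.le)),
      Ioc_union_Ioc_eq_Ioc hβδ.le hδa]
  -- pointwise bounds and integral bounds on Ioc β δ
  have hcont : ∀ c : ℝ, IntegrableOn (fun t => c * ((Real.log t + 1) / t)) (Ioc β δ) volume := by
    intro c
    refine IntegrableOn.mono_set (ContinuousOn.integrableOn_Icc ?_) Ioc_subset_Icc_self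
    refine ContinuousOn.mul continuousOn_const ?_
    refine ContinuousOn.div ((Real.continuousOn_log.mono ?_).add continuousOn_const)
      continuousOn_id ?_
    · intro t ht; exact ne_of_gt (lt_of_lt_of_le hβ0 ht.1)
    · intro t ht; exact ne_of_gt (lt_of_lt_of_le hβ0 ht.1)
  have hlog1 : ∀ t ∈ Ioc β δ, Real.log t + 1 ≤ 0 := by
    intro t ht
    have : Real.log t ≤ Real.log (Real.exp (-1)) :=
      Real.log_le_log (hβ0.trans ht.1) (ht.2.trans hδe)
    rw [Real.log_exp] at this
    linarith
  have hIub : ∫ t in Ioc β δ, (Real.log t + 1) * (F (Ioi t)).toReal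
      ≤ ∫ t in Ioc β δ, (θp - ε') * ((Real.log t + 1) / t) := by
    refine setIntegral_mono_on (hIθa.mono_set (Ioc_subset_Ioc_right hδa)) (hcont _)
      measurableSet_Ioc (fun t ht => ?_)
    have h1 := (hbound t (hβ0.trans ht.1) ht.2).1
    have h2 := hlog1 t ht
    calc (Real.log t + 1) * (F (Ioi t)).toReal
        ≤ (Real.log t + 1) * ((θp - ε') / t) := by
          exact mul_le_mul_of_nonpos_left h1 h2
      _ = (θp - ε') * ((Real.log t + 1) / t) := by ring
  have hIlb : ∫ t in Ioc β δ, (θp + ε') * ((Real.log t + 1) / t)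
      ≤ ∫ t in Ioc β δ, (Real.log t + 1) * (F (Ioi t)).toReal := by
    refine setIntegral_mono_on (hcont _) (hIθa.mono_set (Ioc_subset_Ioc_right hδa))
      measurableSet_Ioc (fun t ht => ?_)
    have h1 := (hbound t (hβ0.trans ht.1) ht.2).2
    have h2 := hlog1 t ht
    calc (θp + ε') * ((Real.log t + 1) / t) = (Real.log t + 1) * ((θp + ε') / t) := by ring
      _ ≤ (Real.log t + 1) * (F (Ioi t)).toReal := mul_le_mul_of_nonpos_left h1 h2
  -- value of P
  have hP : ∀ c : ℝ, ∫ t in Ioc β δ, c * ((Real.log t + 1) / t)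
      = c * (K - ((Real.log β)^2 / 2 + Real.log β)) := by
    intro c
    rw [integral_const_mul, ftc_logsq hβ0 hβδ.le, hK]
  -- identify P/L² with the comparison expressions
  have hLsq : (Real.log β) ^ 2 = L ^ 2 := by rw [hLlog]; ring
  have halg : ∀ c : ℝ, (1 / L^2) * (c * (K - ((Real.log β)^2 / 2 + Real.log β)) + C)
      = c * (K * (1/L^2) - 1/2 + 1/L) + C * (1/L^2) := by
    intro c
    have hL0 : L ≠ 0 := hLpos.ne'
    have h1 : Real.log β = -L := by rw [hLlog]; ring
    rw [h1]
    field_simp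
    ring
  have hL2nonneg : (0:ℝ) ≤ 1 / L^2 := by positivity
  -- final squeeze
  rw [Real.dist_eq, abs_lt] at hUBβ hLBβ ⊢
  have hMub : (1 / L^2) * ∫ t in Ioc β a, (Real.log t + 1) * (F (Ioi t)).toReal
      ≤ (θp - ε') * (K * (1/L^2) - 1/2 + 1/L) + C * (1/L^2) := by
    rw [← halg, hsplit]
    refine mul_le_mul_of_nonneg_left ?_ hL2nonneg
    have := hIub
    rw [hP] at this
    linarith
  have hMlb : (θp + ε') * (K * (1/L^2) - 1/2 + 1/L) + C * (1/L^2)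
      ≤ (1 / L^2) * ∫ t in Ioc β a, (Real.log t + 1) * (F (Ioi t)).toReal := by
    rw [← halg, hsplit]
    refine mul_le_mul_of_nonneg_left ?_ hL2nonneg
    have := hIlb
    rw [hP] at this
    linarith
  constructor
  · have h1 := hLBβ.1
    have h2 : ε' = ε / 4 := hε'def
    linarith
  · have h1 := hUBβ.2
    have h2 : ε' = ε / 4 := hε'def
    linarith


/-- Under (H2-1) on the positive side (`β θ₊(β) → θ₊ ≥ 0`), for every fixed `a ∈ (0,1]`,
`(1/(log(1/β))²) ∫_{(β,a]} x log x F(dx) → −θ₊/2` as `β → 0`. -/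
theorem stmt8 (F : Measure ℝ) (p θp a : ℝ) (hp : 1 ≤ p)
    (hsupp : F {x : ℝ | p < |x|} = 0)
    (hlevy : ∫⁻ x, ENNReal.ofReal (min (x ^ 2) 1) ∂F < ⊤)
    (hθp : 0 ≤ θp) (ha : a ∈ Ioc (0:ℝ) 1)
    (hlim : Tendsto (fun β : ℝ => β * (F (Ioi β)).toReal) (𝓝[>] 0) (𝓝 θp)) :
    Tendsto (fun β : ℝ =>
        (1 / (Real.log (1 / β)) ^ 2) * ∫ x in Ioc β a, x * Real.log x ∂F)
      (𝓝[>] 0) (𝓝 (-(θp / 2))) := by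
  obtain ⟨ha0, ha1⟩ := ha
  have hfin : ∀ b : ℝ, 0 < b → F (Ioi b) < ⊤ :=
    fun b hb => fin_tail F p hp hsupp hlevy hb
  have T1 := main_term F θp hfin ha0 ha1 hlim
  have T2 : Tendsto (fun β : ℝ => (β * (F (Ioi β)).toReal) * (-(1 / Real.log (1 / β))))
      (𝓝[>] 0) (𝓝 0) := by
    have := hlim.mul lim_invlog.neg
    simpa using this
  have T3 : Tendsto (fun β : ℝ =>
      (-((F (Ioi a)).toReal * (a * Real.log a))) * (1 / (Real.log (1 / β)) ^ 2))
      (𝓝[>] 0) (𝓝 0) := by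
    have := lim_invlogsq.const_mul (-((F (Ioi a)).toReal * (a * Real.log a)))
    simpa using this
  have hsum := (T1.add T2).add T3
  rw [add_zero, add_zero] at hsum
  refine Tendsto.congr' ?_ hsum
  filter_upwards [Ioo_mem_nhdsGT_of_mem (⟨le_rfl, ha0⟩ : (0:ℝ) ∈ Ico 0 a)] with β hβ
  obtain ⟨hβ0, hβa⟩ := hβ
  have hβ1 : β < 1 := lt_of_lt_of_le hβa ha1
  have hL : Real.log (1 / β) = - Real.log β := by rw [one_div, Real.log_inv]
  have hLpos : 0 < Real.log (1 / β) := by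
    rw [hL, neg_pos]
    exact Real.log_neg hβ0 hβ1
  rw [key_identity F hβ0 hβa ha1 (hfin β hβ0)]
  rw [hL]
  have hlogβ : Real.log β ≠ 0 := by
    rw [hL] at hLpos; intro h; rw [h] at hLpos; simp at hLpos
  field_simp
  ring
end
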